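/- Let H be a real Hilbert space and (L_k)_{k∈K} a finite family of real Hilbert spaces with linear maps J_k : H → L_k (jump operators). Let ℓ : H → ℝ be linear, ρ > 0, and g_k ∈ L_k for each k. Let V ⊆ H be a linear subspace and S = v₀ + V an affine subspace of H. Assume: (a) consistency: u ∈ H satisfies J_k u = 0 for all k ∈ K and ⟪w, u⟫_H − Σ_{k∈K} ⟪J_k w, g_k⟫_{L_k} = ℓ(w) for all w ∈ V; (b) penalized discrete problem: u^h ∈ S satisfies ⟪w, u^h⟫_H + ρ Σ_{k∈K} ⟪J_k w, J_k u^h⟫_{L_k} = ℓ(w) for all w ∈ V; (c) gap estimate: there are constants γ_k ≥ 0 with ‖J_k w‖_{L_k} ≤ γ_k ‖w‖_H for all w ∈ V; (d) trace bounds: there are constants c_k ≥ 0 with ‖J_k v‖_{L_k} ≤ c_k ‖v‖_H for all v ∈ H; (e) interpolation estimate: there exists v^h ∈ S with ‖u − v^h‖_H ≤ E. Then ‖u^h − u‖_H ≤ Σ_{k∈K} γ_k ‖g_k‖_{L_k} + (2 + ρ Σ_{k∈K} γ_k c_k) · E. -/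
import Mathlib


open RealInnerProductSpace

set_option maxHeartbeats 1000000 in
/-- Hilbert-space form of Theorem 1: error estimate for a penalized
multi-patch weak formulation. -/
theorem multi_patch_penalized_error_estimate
    {H : Type*} [NormedAddCommGroup H] [InnerProductSpace ℝ H]
    {K : Type*} [Fintype K]
    {L : K → Type*} [∀ k, NormedAddCommGroup (L k)]
    [∀ k, InnerProductSpace ℝ (L k)]
    (J : ∀ k, H →ₗ[ℝ] L k) (ℓ : H →ₗ[ℝ] ℝ)
    (ρ : ℝ) (hρ : 0 < ρ) (g : ∀ k, L k)
    (V : Submodule ℝ H) (v₀ : H) (S : Set H)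
    (hS : S = {x : H | x - v₀ ∈ V})
    -- (a) consistency
    (u : H) (hu_jump : ∀ k, J k u = 0)
    (hu_weak : ∀ w ∈ V, ⟪w, u⟫ - ∑ k, ⟪J k w, g k⟫ = ℓ w)
    -- (b) penalized discrete problem
    (uh : H) (huh_mem : uh ∈ S)
    (huh_weak : ∀ w ∈ V, ⟪w, uh⟫ + ρ * ∑ k, ⟪J k w, J k uh⟫ = ℓ w)
    -- (c) gap estimate
    (γ : K → ℝ) (hγ : ∀ k, 0 ≤ γ k)
    (hgap : ∀ k, ∀ w ∈ V, ‖J k w‖ ≤ γ k * ‖w‖)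
    -- (d) trace bounds
    (c : K → ℝ) (hc : ∀ k, 0 ≤ c k)
    (htrace : ∀ k, ∀ v : H, ‖J k v‖ ≤ c k * ‖v‖)
    -- (e) interpolation estimate
    (E : ℝ) (hinterp : ∃ vh ∈ S, ‖u - vh‖ ≤ E) :
    ‖uh - u‖ ≤ ∑ k, γ k * ‖g k‖ + (2 + ρ * ∑ k, γ k * c k) * E := by
  obtain ⟨vh, hvh, hvhE⟩ := hinterp
  set e : H := uh - u with he_def
  set d : H := u - vh with hd_def
  set w : H := uh - vh with hw_def
  have hE0 : (0:ℝ) ≤ E := le_trans (norm_nonneg _) hvhE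
  have hwV : w ∈ V := by
    rw [hS] at huh_mem hvh
    have := V.sub_mem huh_mem hvh
    simpa [hw_def, sub_sub_sub_cancel_right] using this
  -- key variational identity
  have key : ⟪w, e⟫ + ρ * ∑ k, ⟪J k w, J k e⟫ = -∑ k, ⟪J k w, g k⟫ := by
    have h1 := huh_weak w hwV
    have h2 := hu_weak w hwV
    have hJe : ∀ k, ⟪J k w, J k e⟫ = ⟪J k w, J k uh⟫ := by
      intro k
      have h : J k e = J k uh - J k u := by rw [he_def, map_sub]
      rw [h, inner_sub_right, hu_jump k, inner_zero_right, sub_zero]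
    have hwe : ⟪w, e⟫ = ⟪w, uh⟫ - ⟪w, u⟫ := inner_sub_right w uh u
    simp only [hJe, hwe]
    linarith
  -- decompositions: w = e + d, e = w - d
  have hwed : w = e + d := by rw [he_def, hd_def, hw_def]; abel
  have hewd : e = w - d := by rw [he_def, hd_def, hw_def]; abel
  have hwnorm : ‖w‖ ≤ ‖e‖ + E := by
    calc ‖w‖ = ‖e + d‖ := by rw [hwed]
    _ ≤ ‖e‖ + ‖d‖ := norm_add_le _ _
    _ ≤ ‖e‖ + E := by linarith
  -- energy identity
  have main : ‖e‖^2 + ρ * ∑ k, ‖J k w‖^2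
      = -⟪d, e⟫ + ρ * ∑ k, ⟪J k w, J k d⟫ - ∑ k, ⟪J k w, g k⟫ := by
    have hwe : ⟪w, e⟫ = ‖e‖^2 + ⟪d, e⟫ := by
      rw [hwed, inner_add_left, real_inner_self_eq_norm_sq]
    have hJ : ∀ k, ⟪J k w, J k e⟫ = ‖J k w‖^2 - ⟪J k w, J k d⟫ := by
      intro k
      have h : J k e = J k w - J k d := by rw [hewd, map_sub]
      rw [h, inner_sub_right, real_inner_self_eq_norm_sq]
    have hsum : ∑ k, ⟪J k w, J k e⟫
        = ∑ k, ‖J k w‖^2 - ∑ k, ⟪J k w, J k d⟫ := by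
      rw [← Finset.sum_sub_distrib]
      exact Finset.sum_congr rfl fun k _ => hJ k
    rw [hwe, hsum] at key
    ring_nf at key ⊢
    linarith
  -- bounds on the right-hand side
  have hb1 : -⟪d, e⟫ ≤ E * ‖e‖ := by
    have := abs_real_inner_le_norm d e
    have h2 : ‖d‖ * ‖e‖ ≤ E * ‖e‖ :=
      mul_le_mul_of_nonneg_right hvhE (norm_nonneg _)
    have := neg_le_abs (⟪d, e⟫)
    linarith
  have hb2 : ∑ k, ⟪J k w, J k d⟫ ≤ (∑ k, γ k * c k) * (E * ‖w‖) := by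
    rw [Finset.sum_mul]
    apply Finset.sum_le_sum
    intro k _
    have h1 : ⟪J k w, J k d⟫ ≤ ‖J k w‖ * ‖J k d‖ := real_inner_le_norm _ _
    have h2 : ‖J k w‖ ≤ γ k * ‖w‖ := hgap k w hwV
    have h3 : ‖J k d‖ ≤ c k * E :=
      le_trans (htrace k d) (mul_le_mul_of_nonneg_left hvhE (hc k))
    have h4 : ‖J k w‖ * ‖J k d‖ ≤ (γ k * ‖w‖) * (c k * E) :=
      mul_le_mul h2 h3 (norm_nonneg _)
        (mul_nonneg (hγ k) (norm_nonneg _))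
    nlinarith
  have hb3 : -∑ k, ⟪J k w, g k⟫ ≤ (∑ k, γ k * ‖g k‖) * ‖w‖ := by
    rw [← Finset.sum_neg_distrib, Finset.sum_mul]
    apply Finset.sum_le_sum
    intro k _
    have h1 := abs_real_inner_le_norm (J k w) (g k)
    have h2 : ‖J k w‖ ≤ γ k * ‖w‖ := hgap k w hwV
    have h3 : ‖J k w‖ * ‖g k‖ ≤ (γ k * ‖w‖) * ‖g k‖ :=
      mul_le_mul_of_nonneg_right h2 (norm_nonneg _)
    have h4 := neg_le_abs (⟪J k w, g k⟫)
    nlinarith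
  have hsq : (0:ℝ) ≤ ∑ k, ‖J k w‖^2 :=
    Finset.sum_nonneg fun k _ => sq_nonneg _
  set A : ℝ := ∑ k, γ k * ‖g k‖ with hA_def
  set B : ℝ := ∑ k, γ k * c k with hB_def
  have hA0 : 0 ≤ A :=
    Finset.sum_nonneg fun k _ => mul_nonneg (hγ k) (norm_nonneg _)
  have hB0 : 0 ≤ B :=
    Finset.sum_nonneg fun k _ => mul_nonneg (hγ k) (hc k)
  have hineq : ‖e‖^2 ≤ E * ‖e‖ + (ρ * B * E + A) * (‖e‖ + E) := by
    have h1 : ‖e‖^2 ≤ ‖e‖^2 + ρ * ∑ k, ‖J k w‖^2 := by nlinarith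
    have h2 : ρ * ∑ k, ⟪J k w, J k d⟫ ≤ ρ * (B * (E * ‖w‖)) :=
      mul_le_mul_of_nonneg_left hb2 (le_of_lt hρ)
    have h3 : (ρ * B * E + A) * ‖w‖ ≤ (ρ * B * E + A) * (‖e‖ + E) := by
      apply mul_le_mul_of_nonneg_left hwnorm
      positivity
    nlinarith [hb3]
  -- conclude from the quadratic inequality
  show ‖e‖ ≤ A + (2 + ρ * B) * E
  by_contra hcon
  push_neg at hcon
  have he0 : 0 < ‖e‖ :=
    lt_of_le_of_lt (by positivity : (0:ℝ) ≤ A + (2 + ρ * B) * E) hcon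
  nlinarith [mul_pos (sub_pos.mpr hcon) (by positivity : (0:ℝ) < ‖e‖ + E)]
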